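/- arXiv:1812.03653 — 4 statements merged into one kernel-verified Lean document; each statement's English description precedes it below -/
import Mathlib

section
/- Let W, U be Hilbert spaces and consider the coupled system: A(w, w̃) + B(u, w̃) = ⟨f, w̃⟩ for all w̃ ∈ W, and B(ũ, w) − κ D(u, ũ) = −κ⟨d, ũ⟩ for all ũ ∈ U, where A is coercive on W (constant α), D is symmetric positive and coercive on H := ker(B) ⊆ U (constant δ), B satisfies the inf-sup condition with constant β > 0 on H⊥, and A, B, D are bounded with constants a, b, d. Then for every f ∈ W', d ∈ U', κ > 0, the system has a unique solution (w, u) ∈ W × U, and ‖u‖ + ‖w‖ ≤ C(‖f‖ + ‖d‖) with C depending only on κ, α, β, δ, a, d. -/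
open InnerProductSpace ContinuousLinearMap

set_option maxHeartbeats 1000000
set_option synthInstance.maxHeartbeats 200000

noncomputable def stmt5S (aP dP α β δ κ : ℝ) : ℝ :=
  β * δ + κ * (dP + δ) * aP + κ * (β + dP + δ) + α * β * δ

noncomputable def stmt5C (aP dP α β δ κ : ℝ) : ℝ :=
  (α * β * δ * β + dP * (α * β * δ + aP * stmt5S aP dP α β δ κ)
    + δ * (α * β * δ + aP * stmt5S aP dP α β δ κ)
    + β * δ * stmt5S aP dP α β δ κ) / (α * β * δ * β * δ)

lemma stmt5C_pos {aP dP α β δ κ : ℝ} (hα : 0 < α) (hβ : 0 < β) (hδ : 0 < δ) (hκ : 0 < κ)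
    (haP0 : 0 ≤ aP) (hdP0 : 0 ≤ dP) : 0 < stmt5C aP dP α β δ κ := by
  have hS : 0 < stmt5S aP dP α β δ κ := by unfold stmt5S; positivity
  unfold stmt5C
  positivity

lemma stmt5_arith {aP dP α β δ κ x y z F nu : ℝ}
    (hα : 0 < α) (hβ : 0 < β) (hδ : 0 < δ) (hκ : 0 < κ)
    (haP0 : 0 ≤ aP) (hdP0 : 0 ≤ dP)
    (hx0 : 0 ≤ x) (hy0 : 0 ≤ y) (hz0 : 0 ≤ z) (hF0 : 0 ≤ F)
    (hs2 : β * z ≤ F + aP * x) (hs3 : δ * y ≤ F + dP * z)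
    (hs4 : α * x ^ 2 ≤ F * x + κ * F * (y + z))
    (hnu : nu ≤ y + z) :
    nu + x ≤ stmt5C aP dP α β δ κ * F := by
  set S := stmt5S aP dP α β δ κ with hSdef
  have hSpos : 0 < S := by rw [hSdef]; unfold stmt5S; positivity
  have hSeq : S = β * δ + κ * (dP + δ) * aP + κ * (β + dP + δ) + α * β * δ := by
    rw [hSdef]; unfold stmt5S; ring
  have hyzb : β * δ * (y + z) ≤ (β + dP + δ) * F + (dP + δ) * aP * x := by
    linarith [mul_le_mul_of_nonneg_left hs3 hβ.le,
      mul_le_mul_of_nonneg_left hs2 hδ.le,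
      mul_le_mul_of_nonneg_left hs2 hdP0]
  have hmain : α * β * δ * x ^ 2 ≤
      (β * δ + κ * (dP + δ) * aP) * F * x + (κ * (β + dP + δ)) * F ^ 2 := by
    linarith [mul_le_mul_of_nonneg_left hyzb (by positivity : (0:ℝ) ≤ κ * F),
      mul_le_mul_of_nonneg_left hs4 (by positivity : (0:ℝ) ≤ β * δ)]
  have hxF : α * β * δ * x ≤ S * F := by
    rcases le_or_gt x F with h | h
    · rw [hSeq]
      linarith [mul_le_mul_of_nonneg_left h (by positivity : (0:ℝ) ≤ α * β * δ),
        mul_nonneg (by positivity : (0:ℝ) ≤ β * δ + κ * (dP + δ) * aP + κ * (β + dP + δ)) hF0]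
    · have hxpos : 0 < x := lt_of_le_of_lt hF0 h
      have hmm : α * β * δ * x * x
          ≤ ((β * δ + κ * (dP + δ) * aP + κ * (β + dP + δ)) * F) * x := by
        linarith [hmain,
          mul_nonneg (mul_nonneg (by positivity : (0:ℝ) ≤ κ * (β + dP + δ)) hF0)
            (sub_nonneg.mpr h.le)]
      have hdd := le_of_mul_le_mul_right hmm hxpos
      rw [hSeq]
      linarith [hdd, mul_nonneg (by positivity : (0:ℝ) ≤ α * β * δ) hF0]
  have hβRz : α * β * δ * β * z ≤ (α * β * δ + aP * S) * F := by
    linarith [mul_le_mul_of_nonneg_left hs2 (by positivity : (0:ℝ) ≤ α * β * δ),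
      mul_le_mul_of_nonneg_left hxF haP0]
  have hzF : α * β * δ * β * δ * z ≤ δ * (α * β * δ + aP * S) * F := by
    linarith [mul_le_mul_of_nonneg_left hβRz hδ.le]
  have hyF : α * β * δ * β * δ * y
      ≤ (α * β * δ * β + dP * (α * β * δ + aP * S)) * F := by
    linarith [mul_le_mul_of_nonneg_left hs3 (by positivity : (0:ℝ) ≤ α * β * δ * β),
      mul_le_mul_of_nonneg_left hβRz hdP0]
  have hxF2 : α * β * δ * β * δ * x ≤ β * δ * S * F := by
    linarith [mul_le_mul_of_nonneg_left hxF (by positivity : (0:ℝ) ≤ β * δ)]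
  rw [stmt5C, ← hSdef, div_mul_eq_mul_div, le_div_iff₀ (by positivity)]
  linarith [mul_le_mul_of_nonneg_right hnu (by positivity : (0:ℝ) ≤ α * β * δ * β * δ),
    hzF, hyF, hxF2]

lemma apriori_aux {W U : Type*}
    [NormedAddCommGroup W] [InnerProductSpace ℝ W] [CompleteSpace W]
    [NormedAddCommGroup U] [InnerProductSpace ℝ U] [CompleteSpace U]
    (A : W →L[ℝ] W →L[ℝ] ℝ) (B : U →L[ℝ] W →L[ℝ] ℝ) (D : U →L[ℝ] U →L[ℝ] ℝ)
    (α β δ a d κ : ℝ)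
    (hα : 0 < α) (hβ : 0 < β) (hδ : 0 < δ) (hκ : 0 < κ)
    (hAcont : ∀ (v wt : W), A v wt ≤ a * ‖v‖ * ‖wt‖)
    (hDcont : ∀ u v : U, D u v ≤ d * ‖u‖ * ‖v‖)
    (hAcoer : ∀ v : W, α * ‖v‖ ^ 2 ≤ A v v)
    (hDpos : ∀ u : U, 0 ≤ D u u)
    (hDcoer : ∀ u ∈ LinearMap.ker (B : U →ₗ[ℝ] W →L[ℝ] ℝ), δ * ‖u‖ ^ 2 ≤ D u u)
    (hinfsup : ∀ u ∈ (LinearMap.ker (B : U →ₗ[ℝ] W →L[ℝ] ℝ))ᗮ, β * ‖u‖ ≤ ‖B u‖) :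
    ∃ C > 0, ∀ (f : W →L[ℝ] ℝ) (g : U →L[ℝ] ℝ) (w : W) (u : U),
      (∀ wt : W, A w wt + B u wt = f wt) →
      (∀ ut : U, B ut w - κ * D u ut = -(κ * g ut)) →
      ‖u‖ + ‖w‖ ≤ C * (‖f‖ + ‖g‖) := by
  obtain ⟨aP, haPa, haP0⟩ : ∃ aP : ℝ, a ≤ aP ∧ 0 ≤ aP :=
    ⟨max a 0, le_max_left a 0, le_max_right a 0⟩
  obtain ⟨dP, hdPd, hdP0⟩ : ∃ dP : ℝ, d ≤ dP ∧ 0 ≤ dP :=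
    ⟨max d 0, le_max_left d 0, le_max_right d 0⟩
  refine ⟨stmt5C aP dP α β δ κ, stmt5C_pos hα hβ hδ hκ haP0 hdP0, ?_⟩
  intro f g w u h1 h2
  have hAabs : ∀ v wt : W, |A v wt| ≤ aP * ‖v‖ * ‖wt‖ := by
    intro v wt
    have h1' := hAcont v wt
    have h2' := hAcont v (-wt)
    rw [map_neg, norm_neg] at h2'
    have hprod : 0 ≤ (aP - a) * (‖v‖ * ‖wt‖) :=
      mul_nonneg (sub_nonneg.mpr haPa) (by positivity)
    rw [abs_le]
    constructor <;> nlinarith [hprod]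
  have hDabs : ∀ x y : U, |D x y| ≤ dP * ‖x‖ * ‖y‖ := by
    intro x y
    have h1' := hDcont x y
    have h2' := hDcont x (-y)
    rw [map_neg, norm_neg] at h2'
    have hprod : 0 ≤ (dP - d) * (‖x‖ * ‖y‖) :=
      mul_nonneg (sub_nonneg.mpr hdPd) (by positivity)
    rw [abs_le]
    constructor <;> nlinarith [hprod]
  set H := LinearMap.ker (B : U →ₗ[ℝ] W →L[ℝ] ℝ) with hHdef
  haveI : CompleteSpace H := (ContinuousLinearMap.isClosed_ker B).completeSpace_coe
  set u₀ : U := (H.orthogonalProjection u : U) with hu₀def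
  set u₁ : U := u - u₀ with hu₁def
  have hu0mem : u₀ ∈ H := SetLike.coe_mem _
  have hu1mem : u₁ ∈ Hᗮ := H.sub_starProjection_mem_orthogonal u
  have husum : u = u₀ + u₁ := by rw [hu₁def]; abel
  have hBu0 : B u₀ = 0 := LinearMap.mem_ker.mp hu0mem
  have hf0 : 0 ≤ ‖f‖ := norm_nonneg f
  have hg0 : 0 ≤ ‖g‖ := norm_nonneg g
  have hstep2 : β * ‖u₁‖ ≤ (‖f‖ + ‖g‖) + aP * ‖w‖ := by
    have hBu : ‖B u‖ ≤ ‖f‖ + aP * ‖w‖ := by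
      apply opNorm_le_bound _ (by positivity)
      intro wt
      have h1w := h1 wt
      have heq : B u wt = f wt - A w wt := by linarith
      rw [Real.norm_eq_abs, heq]
      have hfle : |f wt| ≤ ‖f‖ * ‖wt‖ := by
        rw [← Real.norm_eq_abs]; exact f.le_opNorm wt
      have hA2 := hAabs w wt
      calc |f wt - A w wt| ≤ |f wt| + |A w wt| := abs_sub _ _
        _ ≤ ‖f‖ * ‖wt‖ + aP * ‖w‖ * ‖wt‖ := by linarith [hfle, hA2]
        _ = (‖f‖ + aP * ‖w‖) * ‖wt‖ := by ring
    have hBeq : B u₁ = B u := by rw [husum, map_add, hBu0, zero_add]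
    have hi := hinfsup u₁ hu1mem
    rw [hBeq] at hi
    linarith
  have hstep3 : δ * ‖u₀‖ ≤ (‖f‖ + ‖g‖) + dP * ‖u₁‖ := by
    have h2u0 := h2 u₀
    have hB0 : B u₀ w = 0 := by rw [hBu0]; simp
    have hc : κ * D u u₀ = κ * g u₀ := by linarith
    have hDuu0 : D u u₀ = g u₀ := mul_left_cancel₀ (ne_of_gt hκ) hc
    have hsplit : D u u₀ = D u₀ u₀ + D u₁ u₀ := by
      rw [husum, map_add, ContinuousLinearMap.add_apply]
    have hcoer := hDcoer u₀ hu0mem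
    have hg1 : g u₀ ≤ ‖g‖ * ‖u₀‖ := by
      have hgo := g.le_opNorm u₀
      rw [Real.norm_eq_abs] at hgo
      exact le_trans (le_abs_self _) hgo
    have hD1 : -(dP * ‖u₁‖ * ‖u₀‖) ≤ D u₁ u₀ := by
      have hd2 := hDabs u₁ u₀
      rw [abs_le] at hd2
      linarith [hd2.1]
    have hy2 : δ * ‖u₀‖ ^ 2 ≤ ((‖g‖ + dP * ‖u₁‖)) * ‖u₀‖ := by linarith [hcoer, hDuu0, hsplit, hg1, hD1]
    rcases eq_or_lt_of_le (norm_nonneg u₀) with h | h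
    · rw [← h, mul_zero]; positivity
    · nlinarith
  have hstep4 : α * ‖w‖ ^ 2 ≤ (‖f‖ + ‖g‖) * ‖w‖ + κ * (‖f‖ + ‖g‖) * (‖u₀‖ + ‖u₁‖) := by
    have h1w := h1 w
    have h2u := h2 u
    have hkey : A w w + κ * D u u = f w + κ * g u := by linarith
    have hfw : f w ≤ ‖f‖ * ‖w‖ := by
      have hfo := f.le_opNorm w
      rw [Real.norm_eq_abs] at hfo
      exact le_trans (le_abs_self _) hfo
    have hgu : g u ≤ ‖g‖ * ‖u‖ := by
      have hgo := g.le_opNorm u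
      rw [Real.norm_eq_abs] at hgo
      exact le_trans (le_abs_self _) hgo
    have hnu : ‖u‖ ≤ ‖u₀‖ + ‖u₁‖ := by rw [husum]; exact norm_add_le _ _
    have hcoA := hAcoer w
    have hDp := hDpos u
    have hgF : ‖g‖ * ‖u‖ ≤ (‖f‖ + ‖g‖) * (‖u₀‖ + ‖u₁‖) := by
      apply mul_le_mul (by linarith) hnu (norm_nonneg u) (by positivity)
    have hgu' : κ * g u ≤ κ * (‖f‖ + ‖g‖) * (‖u₀‖ + ‖u₁‖) := by
      linarith [mul_le_mul_of_nonneg_left hgu hκ.le, mul_le_mul_of_nonneg_left hgF hκ.le]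
    linarith [mul_nonneg hg0 (norm_nonneg w), hcoA, hkey, hfw, hgu', mul_nonneg hκ.le hDp]
  have hnu : ‖u‖ ≤ ‖u₀‖ + ‖u₁‖ := by rw [husum]; exact norm_add_le _ _
  exact stmt5_arith hα hβ hδ hκ haP0 hdP0 (norm_nonneg w) (norm_nonneg u₀) (norm_nonneg u₁)
    (by positivity) hstep2 hstep3 hstep4 hnu

noncomputable def opify {V₁ V₂ : Type*}
    [NormedAddCommGroup V₁] [InnerProductSpace ℝ V₁]
    [NormedAddCommGroup V₂] [InnerProductSpace ℝ V₂] [CompleteSpace V₂]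
    (T : V₁ →L[ℝ] V₂ →L[ℝ] ℝ) : V₁ →L[ℝ] V₂ :=
  LinearMap.mkContinuous
    { toFun := fun v => (InnerProductSpace.toDual ℝ V₂).symm (T v)
      map_add' := by intro v₁ v₂; simp
      map_smul' := by intro c v; simp }
    ‖T‖ (fun v => by
      simp only [LinearMap.coe_mk, AddHom.coe_mk, LinearIsometryEquiv.norm_map]
      exact T.le_opNorm v)

lemma opify_inner {V₁ V₂ : Type*}
    [NormedAddCommGroup V₁] [InnerProductSpace ℝ V₁]
    [NormedAddCommGroup V₂] [InnerProductSpace ℝ V₂] [CompleteSpace V₂]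
    (T : V₁ →L[ℝ] V₂ →L[ℝ] ℝ) (v : V₁) (x : V₂) :
    (inner ℝ (opify T v) x : ℝ) = T v x :=
  InnerProductSpace.toDual_symm_apply

theorem stmt5 {W U : Type*}
    [NormedAddCommGroup W] [InnerProductSpace ℝ W] [CompleteSpace W]
    [NormedAddCommGroup U] [InnerProductSpace ℝ U] [CompleteSpace U]
    (A : W →L[ℝ] W →L[ℝ] ℝ) (B : U →L[ℝ] W →L[ℝ] ℝ) (D : U →L[ℝ] U →L[ℝ] ℝ)
    (α β δ a b d κ : ℝ)
    (hα : 0 < α) (hβ : 0 < β) (hδ : 0 < δ) (hκ : 0 < κ)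
    (hAcont : ∀ (v wt : W), A v wt ≤ a * ‖v‖ * ‖wt‖)
    (hBcont : ∀ (u : U) (wt : W), B u wt ≤ b * ‖u‖ * ‖wt‖)
    (hDcont : ∀ u v : U, D u v ≤ d * ‖u‖ * ‖v‖)
    (hAcoer : ∀ v : W, α * ‖v‖ ^ 2 ≤ A v v)
    (hDsym : ∀ u v : U, D u v = D v u) (hDpos : ∀ u : U, 0 ≤ D u u)
    (hDcoer : ∀ u ∈ LinearMap.ker (B : U →ₗ[ℝ] W →L[ℝ] ℝ), δ * ‖u‖ ^ 2 ≤ D u u)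
    (hinfsup : ∀ u ∈ (LinearMap.ker (B : U →ₗ[ℝ] W →L[ℝ] ℝ))ᗮ, β * ‖u‖ ≤ ‖B u‖) :
    ∃ C > 0, ∀ (f : W →L[ℝ] ℝ) (d' : U →L[ℝ] ℝ),
      (∃! p : W × U,
        (∀ wt : W, A p.1 wt + B p.2 wt = f wt) ∧
        (∀ ut : U, B ut p.1 - κ * D p.2 ut = -(κ * d' ut))) ∧
      (∀ p : W × U,
        ((∀ wt : W, A p.1 wt + B p.2 wt = f wt) ∧
         (∀ ut : U, B ut p.1 - κ * D p.2 ut = -(κ * d' ut))) →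
        ‖p.2‖ + ‖p.1‖ ≤ C * (‖f‖ + ‖d'‖)) := by
  obtain ⟨C, hC, hest⟩ := apriori_aux A B D α β δ a d κ hα hβ hδ hκ hAcont hDcont hAcoer
    hDpos hDcoer hinfsup
  obtain ⟨C', hC', hest'⟩ := apriori_aux A.flip B D α β δ a d κ hα hβ hδ hκ
    (fun v wt => by rw [ContinuousLinearMap.flip_apply]; linarith [hAcont wt v])
    hDcont (fun v => by rw [ContinuousLinearMap.flip_apply]; exact hAcoer v)
    hDpos hDcoer hinfsup
  -- the Hilbert space W ×₂ U and the system operator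
  set E := WithLp 2 (W × U) with hE
  haveI : CompleteSpace E := inferInstanceAs (CompleteSpace (WithLp 2 (W × U)))
  let e : E ≃L[ℝ] W × U := WithLp.prodContinuousLinearEquiv 2 ℝ W U
  let opA := opify A
  let opB := opify B
  let opBt := opify B.flip
  let opD := opify D
  let L₀ : (W × U) →L[ℝ] W × U :=
    (opA.comp (ContinuousLinearMap.fst ℝ W U) + opB.comp (ContinuousLinearMap.snd ℝ W U)).prod
      ((opBt.comp (ContinuousLinearMap.fst ℝ W U)) - κ • opD.comp (ContinuousLinearMap.snd ℝ W U))
  let L : E →L[ℝ] E := ((e.symm : (W × U) →L[ℝ] E).comp (L₀.comp (e : E →L[ℝ] W × U)))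
  have hLf : ∀ xx : E, (L xx).fst = opA xx.fst + opB xx.snd := fun xx => rfl
  have hLs : ∀ xx : E, (L xx).snd = opBt xx.fst - κ • opD xx.snd := fun xx => rfl
  -- norms of components
  have hnormsq : ∀ xx : E, ‖xx‖ ^ 2 = ‖xx.fst‖ ^ 2 + ‖xx.snd‖ ^ 2 := by
    intro xx
    have h := real_inner_self_eq_norm_sq xx
    rw [WithLp.prod_inner_apply, real_inner_self_eq_norm_sq, real_inner_self_eq_norm_sq] at h
    exact h.symm
  have sqle : ∀ s t : ℝ, 0 ≤ s → 0 ≤ t → s ^ 2 ≤ t ^ 2 → s ≤ t := by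
    intro s t hs ht h
    calc s = √(s ^ 2) := (Real.sqrt_sq hs).symm
      _ ≤ √(t ^ 2) := Real.sqrt_le_sqrt h
      _ = t := Real.sqrt_sq ht
  have hfle : ∀ xx : E, ‖xx.fst‖ ≤ ‖xx‖ := by
    intro xx
    apply sqle _ _ (norm_nonneg _) (norm_nonneg _)
    nlinarith [hnormsq xx, sq_nonneg ‖xx.snd‖]
  have hsle : ∀ xx : E, ‖xx.snd‖ ≤ ‖xx‖ := by
    intro xx
    apply sqle _ _ (norm_nonneg _) (norm_nonneg _)
    nlinarith [hnormsq xx, sq_nonneg ‖xx.fst‖]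
  have hwhole : ∀ xx : E, ‖xx‖ ≤ ‖xx.snd‖ + ‖xx.fst‖ := by
    intro xx
    apply sqle _ _ (norm_nonneg _) (by positivity)
    nlinarith [hnormsq xx, mul_nonneg (norm_nonneg xx.fst) (norm_nonneg xx.snd)]
  -- lower bound for L
  have hbelow : ∀ xx : E, ‖xx‖ ≤ (C * (1 + κ⁻¹)) * ‖L xx‖ := by
    intro xx
    have h1 : ∀ wt : W, A xx.fst wt + B xx.snd wt =
        (InnerProductSpace.toDual ℝ W (L xx).fst) wt := by
      intro wt
      rw [InnerProductSpace.toDual_apply_apply, hLf, inner_add_left, opify_inner, opify_inner]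
    have h2 : ∀ ut : U, B ut xx.fst - κ * D xx.snd ut =
        -(κ * ((-κ⁻¹) • InnerProductSpace.toDual ℝ U (L xx).snd) ut) := by
      intro ut
      rw [ContinuousLinearMap.smul_apply, InnerProductSpace.toDual_apply_apply, hLs,
        inner_sub_left, real_inner_smul_left, opify_inner, opify_inner,
        ContinuousLinearMap.flip_apply]
      have hκ' : κ ≠ 0 := ne_of_gt hκ
      simp only [smul_eq_mul]
      field_simp
    have est := hest _ _ _ _ h1 h2
    have hnf : ‖InnerProductSpace.toDual ℝ W (L xx).fst‖ = ‖(L xx).fst‖ :=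
      LinearIsometryEquiv.norm_map _ _
    have hng : ‖(-κ⁻¹) • InnerProductSpace.toDual ℝ U (L xx).snd‖ = κ⁻¹ * ‖(L xx).snd‖ := by
      rw [norm_smul, LinearIsometryEquiv.norm_map, Real.norm_eq_abs, abs_neg,
        abs_of_pos (by positivity)]
    rw [hnf, hng] at est
    have hp := hfle (L xx)
    have hq := hsle (L xx)
    have hw := hwhole xx
    have hκi : 0 < κ⁻¹ := by positivity
    nlinarith [mul_le_mul_of_nonneg_left hp hC.le,
      mul_le_mul_of_nonneg_left hq (by positivity : (0:ℝ) ≤ C * κ⁻¹)]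
  have hCK : 0 < C * (1 + κ⁻¹) := by positivity
  -- closed range
  have hanti : AntilipschitzWith ⟨C * (1 + κ⁻¹), hCK.le⟩ L :=
    ContinuousLinearMap.antilipschitz_of_bound L hbelow
  have hclosed : IsClosed (Set.range L) := hanti.isClosed_range L.uniformContinuous
  set K : Submodule ℝ E := LinearMap.range (L : E →ₗ[ℝ] E) with hK
  have hKclosed : IsClosed (K : Set E) := by
    rw [hK, LinearMap.coe_range, ContinuousLinearMap.coe_coe]
    exact hclosed
  haveI : CompleteSpace K := hKclosed.completeSpace_coe
  -- trivial orthogonal complement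
  have horth : Kᗮ = ⊥ := by
    rw [Submodule.eq_bot_iff]
    intro y hy
    have hyz : ∀ z ∈ K, (inner ℝ z y : ℝ) = 0 := (Submodule.mem_orthogonal K y).mp hy
    have hmem : ∀ xx : E, L xx ∈ K := fun xx => LinearMap.mem_range.mpr ⟨xx, rfl⟩
    have h1' : ∀ wt : W, A.flip y.fst wt + B y.snd wt = (0 : W →L[ℝ] ℝ) wt := by
      intro wt
      have hz := hyz _ (hmem (e.symm (wt, 0)))
      rw [WithLp.prod_inner_apply] at hz
      change inner ℝ (L (e.symm (wt, 0))).fst y.fst + inner ℝ (L (e.symm (wt, 0))).snd y.snd = 0 at hz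
      have he1 : (L (e.symm (wt, 0))).fst = opA wt := by
        rw [hLf]
        show opA wt + opB 0 = opA wt
        simp
      have he2 : (L (e.symm (wt, 0))).snd = opBt wt := by
        rw [hLs]
        show opBt wt - κ • opD 0 = opBt wt
        simp
      rw [he1, he2, opify_inner, opify_inner, ContinuousLinearMap.flip_apply] at hz
      rw [ContinuousLinearMap.zero_apply, ContinuousLinearMap.flip_apply]
      linarith
    have h2' : ∀ ut : U, B ut y.fst - κ * D y.snd ut = -(κ * (0 : U →L[ℝ] ℝ) ut) := by
      intro ut
      have hz := hyz _ (hmem (e.symm (0, ut)))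
      rw [WithLp.prod_inner_apply] at hz
      change inner ℝ (L (e.symm (0, ut))).fst y.fst + inner ℝ (L (e.symm (0, ut))).snd y.snd = 0 at hz
      have he1 : (L (e.symm (0, ut))).fst = opB ut := by
        rw [hLf]
        show opA 0 + opB ut = opB ut
        simp
      have he2 : (L (e.symm (0, ut))).snd = -(κ • opD ut) := by
        rw [hLs]
        show opBt 0 - κ • opD ut = -(κ • opD ut)
        simp
      rw [he1, he2, inner_neg_left, real_inner_smul_left, opify_inner, opify_inner] at hz
      rw [ContinuousLinearMap.zero_apply, hDsym y.snd ut]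
      linarith
    have est' := hest' 0 0 y.fst y.snd h1' h2'
    simp only [norm_zero] at est'
    have hp0 : ‖y.fst‖ = 0 := le_antisymm (by linarith [norm_nonneg y.snd]) (norm_nonneg _)
    have hq0 : ‖y.snd‖ = 0 := le_antisymm (by linarith [norm_nonneg y.fst]) (norm_nonneg _)
    have : ‖y‖ ^ 2 = 0 := by rw [hnormsq y, hp0, hq0]; ring
    have hy0 : ‖y‖ = 0 := by
      have := pow_eq_zero_iff (n := 2) (by norm_num) |>.mp this
      exact this
    exact norm_eq_zero.mp hy0
  have htop : K = ⊤ := by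
    calc K = Kᗮᗮ := (Submodule.orthogonal_orthogonal K).symm
      _ = (⊥ : Submodule ℝ E)ᗮ := by rw [horth]
      _ = ⊤ := Submodule.bot_orthogonal_eq_top
  refine ⟨C, hC, ?_⟩
  intro f d'
  constructor
  · -- existence and uniqueness
    set tt : E := e.symm ((InnerProductSpace.toDual ℝ W).symm f,
      (-κ) • (InnerProductSpace.toDual ℝ U).symm d') with htt
    have hmem : tt ∈ K := htop ▸ Submodule.mem_top
    obtain ⟨xx, hxx⟩ := LinearMap.mem_range.mp hmem
    have hxx' : L xx = tt := hxx
    have h1 : ∀ wt : W, A xx.fst wt + B xx.snd wt = f wt := by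
      intro wt
      have : (inner ℝ ((L xx).fst) wt : ℝ) = (inner ℝ ((InnerProductSpace.toDual ℝ W).symm f) wt : ℝ) := by
        rw [hxx']; rfl
      rw [hLf, inner_add_left, opify_inner, opify_inner,
        InnerProductSpace.toDual_symm_apply] at this
      exact this
    have h2 : ∀ ut : U, B ut xx.fst - κ * D xx.snd ut = -(κ * d' ut) := by
      intro ut
      have : (inner ℝ ((L xx).snd) ut : ℝ)
          = (inner ℝ ((-κ) • (InnerProductSpace.toDual ℝ U).symm d') ut : ℝ) := by
        rw [hxx']; rfl
      rw [hLs, inner_sub_left, real_inner_smul_left, opify_inner, opify_inner,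
        ContinuousLinearMap.flip_apply, real_inner_smul_left,
        InnerProductSpace.toDual_symm_apply] at this
      rw [this]; ring
    refine ⟨(xx.fst, xx.snd), ⟨h1, h2⟩, ?_⟩
    rintro ⟨w', u'⟩ ⟨h1', h2'⟩
    have hd1 : ∀ wt : W, A (w' - xx.fst) wt + B (u' - xx.snd) wt = (0 : W →L[ℝ] ℝ) wt := by
      intro wt
      have e1 := h1' wt
      have e2 := h1 wt
      simp only [map_sub, ContinuousLinearMap.sub_apply, ContinuousLinearMap.zero_apply] at *
      linarith
    have hd2 : ∀ ut : U, B ut (w' - xx.fst) - κ * D (u' - xx.snd) ut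
        = -(κ * (0 : U →L[ℝ] ℝ) ut) := by
      intro ut
      have e1 := h2' ut
      have e2 := h2 ut
      simp only [map_sub, ContinuousLinearMap.sub_apply, ContinuousLinearMap.zero_apply] at *
      linarith
    have estd := hest 0 0 _ _ hd1 hd2
    simp only [norm_zero] at estd
    have hn1 := norm_nonneg (u' - xx.snd)
    have hn2 := norm_nonneg (w' - xx.fst)
    have hw0 : w' - xx.fst = 0 :=
      norm_eq_zero.mp (le_antisymm (by linarith) hn2)
    have hu0 : u' - xx.snd = 0 :=
      norm_eq_zero.mp (le_antisymm (by linarith) hn1)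
    have : w' = xx.fst := by rwa [sub_eq_zero] at hw0
    have hu : u' = xx.snd := by rwa [sub_eq_zero] at hu0
    simp [this, hu]
  · rintro p ⟨h1, h2⟩
    exact hest f d' p.1 p.2 h1 h2
end

section
/- Under the assumptions of the well-posedness theorem for the coupled system (A coercive with constant α, D coercive on H = ker B with constant δ, inf-sup constant β for B on H⊥, continuity constants a, b, d), if f = 0 and d ∈ H' (i.e., d₁ = 0), then the solution satisfies ‖w‖ ≤ Q‖d₀‖ where 2Q = κα⁻¹(q_d r_a + √(4α(κδ)⁻¹ + q_d² r_a²)), with q_d = d/δ, r_a = a/β. In particular ‖w‖² − κα⁻¹ q_d r_a ‖d₀‖‖w‖ − κα⁻¹δ⁻¹‖d₀‖² ≤ 0. -/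
lemma Dcs {U : Type*} [NormedAddCommGroup U] [InnerProductSpace ℝ U]
    (D : U →L[ℝ] U →L[ℝ] ℝ) (hDsym : ∀ u v : U, D u v = D v u)
    (hDpos : ∀ u : U, 0 ≤ D u u) (x y : U) : (D x y)^2 ≤ D x x * D y y := by
  have h : ∀ s : ℝ, 0 ≤ D y y * (s * s) + (2 * D x y) * s + D x x := by
    intro s
    have h0 := hDpos (x + s • y)
    simp only [map_add, map_smul, ContinuousLinearMap.add_apply,
      ContinuousLinearMap.coe_smul', Pi.smul_apply, smul_eq_mul] at h0
    rw [hDsym y x] at h0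
    nlinarith [h0]
  have hd := discrim_le_zero h
  rw [discrim] at hd
  nlinarith

lemma sqle {x y : ℝ} (hy : 0 ≤ y) (h : x^2 ≤ y^2) : x ≤ y := by
  nlinarith [sq_nonneg (x + y)]

lemma arith_main {α β δ a d κ t N n0 n1 p q X e : ℝ}
    (hα : 0 < α) (hβ : 0 < β) (hδ : 0 < δ) (hκ : 0 < κ) (ha0 : 0 < a) (hdδ : δ ≤ d)
    (ht : 0 ≤ t) (hN : 0 ≤ N) (hn0 : 0 ≤ n0) (hn1 : 0 ≤ n1) (hp0 : 0 ≤ p) (hq0 : 0 ≤ q)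
    (hXc : -(p*q) ≤ X) (hXc2 : X ≤ p*q)
    (hcoer : δ * n0^2 ≤ p^2)
    (hqle : q^2 ≤ d * n1^2)
    (hinf : β * n1 ≤ a * t)
    (he1 : α * t^2 ≤ κ * (e - (p^2 + 2*X + q^2)))
    (he2 : e = p^2 + X)
    (he3 : e ≤ N * n0) :
    α * t^2 ≤ κ*(d/δ)*(a/β)*N*t + κ/δ*N^2 := by
  subst he2
  have hd0 : 0 < d := lt_of_lt_of_le hδ hdδ
  have hXc' : -X ≤ p*q := by linarith
  have hstep1 : α*t^2 ≤ κ * (p*q - q^2) := by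
    have hh := mul_le_mul_of_nonneg_left hXc' hκ.le
    linarith [he1, hh]
  have h1' : p^2 ≤ N*n0 + p*q := by linarith
  have hsδ0 : 0 < Real.sqrt δ := Real.sqrt_pos.mpr hδ
  have hsδ2 : (Real.sqrt δ)^2 = δ := Real.sq_sqrt hδ.le
  have hsd0 : 0 ≤ Real.sqrt d := Real.sqrt_nonneg d
  have hsd2 : (Real.sqrt d)^2 = d := Real.sq_sqrt hd0.le
  have hsδd : Real.sqrt δ ≤ Real.sqrt d := Real.sqrt_le_sqrt hdδ
  have hn0p : Real.sqrt δ * n0 ≤ p := by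
    refine sqle hp0 ?_
    have he : (Real.sqrt δ * n0)^2 = δ * n0^2 := by rw [mul_pow, hsδ2]
    linarith [hcoer, he.le, he.ge]
  have hq_le : q ≤ Real.sqrt d * n1 := by
    refine sqle (mul_nonneg hsd0 hn1) ?_
    have he : (Real.sqrt d * n1)^2 = d * n1^2 := by rw [mul_pow, hsd2]
    linarith [hqle, he.le, he.ge]
  have hp_le : Real.sqrt δ * p ≤ N + Real.sqrt δ * q := by
    rcases hp0.eq_or_lt with h0 | hppos
    · rw [← h0]
      simp only [mul_zero]
      positivity
    · have hkey : p * (Real.sqrt δ * p) ≤ p * (N + Real.sqrt δ * q) := by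
        have g1 := mul_le_mul_of_nonneg_left hn0p hN
        have g2 := mul_le_mul_of_nonneg_left h1' hsδ0.le
        linarith [g1, g2]
      exact (mul_le_mul_iff_right₀ hppos).mp hkey
  have h4 : Real.sqrt δ * (α*t^2) ≤ κ * (q * N) := by
    have g1 := mul_le_mul_of_nonneg_left hstep1 hsδ0.le
    have g2 := mul_le_mul_of_nonneg_left hp_le (mul_nonneg hκ.le hq0)
    linarith [g1, g2]
  have hqb : β * q ≤ Real.sqrt d * (a * t) := by
    have g1 := mul_le_mul_of_nonneg_left hq_le hβ.le
    have g2 := mul_le_mul_of_nonneg_left hinf hsd0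
    linarith [g1, g2]
  have h5a : β * (Real.sqrt δ * (α*t^2)) ≤ κ * N * (Real.sqrt d * (a * t)) := by
    have g1 := mul_le_mul_of_nonneg_left h4 hβ.le
    have g2 := mul_le_mul_of_nonneg_left hqb (mul_nonneg hκ.le hN)
    linarith [g1, g2]
  have h5b : β * δ * (α*t^2) ≤ κ * N * (d * (a * t)) := by
    have g1 := mul_le_mul_of_nonneg_left h5a hsd0
    have hsdeq : Real.sqrt d * (κ * N * (Real.sqrt d * (a * t))) = κ * N * (d * (a * t)) := by
      linear_combination (κ * N * (a * t)) * Real.mul_self_sqrt hd0.le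
    have hδsd : δ ≤ Real.sqrt δ * Real.sqrt d := by
      have g3 := mul_le_mul_of_nonneg_left hsδd hsδ0.le
      have g4 := Real.mul_self_sqrt hδ.le
      linarith
    have hterm : 0 ≤ (Real.sqrt δ * Real.sqrt d - δ) * (β * (α * t^2)) :=
      mul_nonneg (by linarith) (by positivity)
    linarith [g1, hsdeq.le, hsdeq.ge, hterm]
  have hpos : 0 < β*δ := by positivity
  rw [show κ*(d/δ)*(a/β)*N*t = κ*N*(d*(a*t))/(β*δ) by field_simp,
      show κ/δ*N^2 = κ*N^2*β/(β*δ) by field_simp,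
      ← add_div, le_div_iff₀ hpos]
  linarith [h5b, mul_nonneg (mul_nonneg hκ.le (sq_nonneg N)) hβ.le]

lemma arith_con2 {α β δ a d κ t N : ℝ}
    (hα : 0 < α) (hβ : 0 < β) (hδ : 0 < δ) (hκ : 0 < κ)
    (KEY : α*t^2 ≤ κ*(d/δ)*(a/β)*N*t + κ/δ*N^2) :
    t^2 - κ/α*(d/δ)*(a/β)*N*t - κ/(α*δ)*N^2 ≤ 0 := by
  have hmul : α * (t^2 - κ/α*(d/δ)*(a/β)*N*t - κ/(α*δ)*N^2)
      = α*t^2 - κ*(d/δ)*(a/β)*N*t - κ/δ*N^2 := by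
    field_simp
  nlinarith [KEY, hα, hmul]

lemma arith_con1 {α β δ a d κ t N : ℝ}
    (hα : 0 < α) (hβ : 0 < β) (hδ : 0 < δ) (hκ : 0 < κ) (ht : 0 ≤ t) (hN : 0 ≤ N)
    (KEY : α*t^2 ≤ κ*(d/δ)*(a/β)*N*t + κ/δ*N^2) :
    t ≤ (κ / α * ((d / δ) * (a / β) +
        Real.sqrt (4 * α / (κ * δ) + (d / δ) ^ 2 * (a / β) ^ 2)) / 2) * N := by
  have hSarg : (0:ℝ) ≤ 4 * α / (κ * δ) + (d / δ) ^ 2 * (a / β) ^ 2 := by positivity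
  have hS0 : 0 ≤ Real.sqrt (4 * α / (κ * δ) + (d / δ) ^ 2 * (a / β) ^ 2) :=
    Real.sqrt_nonneg _
  have hS2 : (Real.sqrt (4 * α / (κ * δ) + (d / δ) ^ 2 * (a / β) ^ 2))^2
      = 4 * α / (κ * δ) + (d / δ) ^ 2 * (a / β) ^ 2 := Real.sq_sqrt hSarg
  set S := Real.sqrt (4 * α / (κ * δ) + (d / δ) ^ 2 * (a / β) ^ 2) with hSdef
  have KEY' : δ*(α*t^2) ≤ δ*(κ*(d/δ)*(a/β)*N*t) + κ*N^2 := by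
    have h := mul_le_mul_of_nonneg_left KEY hδ.le
    have he : δ*(κ/δ*N^2) = κ*N^2 := by field_simp
    linarith [h, he.le, he.ge]
  have hSrel : δ*((κ*S*N)^2) = 4*α*κ*N^2 + δ*(κ^2*(d/δ)^2*(a/β)^2*N^2) := by
    have : (κ*S*N)^2 = κ^2*N^2*S^2 := by ring
    rw [this, hS2]
    field_simp
  have hXsqδ : δ*((2*α*t - κ*(d/δ)*(a/β)*N)^2) ≤ δ*((κ*S*N)^2) := by
    have g1 := mul_le_mul_of_nonneg_left KEY' (by positivity : (0:ℝ) ≤ 4*α)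
    linarith [g1, hSrel.le, hSrel.ge]
  have hXsq : (2*α*t - κ*(d/δ)*(a/β)*N)^2 ≤ (κ*S*N)^2 :=
    le_of_mul_le_mul_left hXsqδ hδ
  have h7 : 2*α*t - κ*(d/δ)*(a/β)*N ≤ κ*S*N :=
    sqle (by positivity) hXsq
  have hmul2 : α * ((κ / α * ((d / δ) * (a / β) + S) / 2) * N)
      = (κ*(d/δ)*(a/β)*N + κ*S*N)/2 := by
    field_simp
  have h8 : α * t ≤ α * ((κ / α * ((d / δ) * (a / β) + S) / 2) * N) := by
    rw [hmul2]
    linarith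
  exact le_of_mul_le_mul_left h8 hα

set_option maxHeartbeats 2000000 in
theorem stmt6 {W U : Type*}
    [NormedAddCommGroup W] [InnerProductSpace ℝ W] [CompleteSpace W]
    [NormedAddCommGroup U] [InnerProductSpace ℝ U] [CompleteSpace U]
    (A : W →L[ℝ] W →L[ℝ] ℝ) (B : U →L[ℝ] W →L[ℝ] ℝ) (D : U →L[ℝ] U →L[ℝ] ℝ)
    (α β δ a d κ : ℝ)
    (hα : 0 < α) (hβ : 0 < β) (hδ : 0 < δ) (hκ : 0 < κ)
    (hAcont : ∀ (v wt : W), A v wt ≤ a * ‖v‖ * ‖wt‖)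
    (hDcont : ∀ u v : U, D u v ≤ d * ‖u‖ * ‖v‖)
    (hAcoer : ∀ v : W, α * ‖v‖ ^ 2 ≤ A v v)
    (hDsym : ∀ u v : U, D u v = D v u) (hDpos : ∀ u : U, 0 ≤ D u u)
    (hDcoer : ∀ u ∈ LinearMap.ker (B : U →ₗ[ℝ] W →L[ℝ] ℝ), δ * ‖u‖ ^ 2 ≤ D u u)
    (hinfsup : ∀ u ∈ (LinearMap.ker (B : U →ₗ[ℝ] W →L[ℝ] ℝ))ᗮ, β * ‖u‖ ≤ ‖B u‖)
    (d₀ : U →L[ℝ] ℝ) (hd₀ : ∀ v ∈ (LinearMap.ker (B : U →ₗ[ℝ] W →L[ℝ] ℝ))ᗮ, d₀ v = 0)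
    (w : W) (u : U)
    (h1 : ∀ wt : W, A w wt + B u wt = 0)
    (h2 : ∀ ut : U, B ut w - κ * D u ut = -(κ * d₀ ut)) :
    ‖w‖ ≤ (κ / α * ((d / δ) * (a / β) +
        Real.sqrt (4 * α / (κ * δ) + (d / δ) ^ 2 * (a / β) ^ 2)) / 2) * ‖d₀‖ ∧
    ‖w‖ ^ 2 - κ / α * (d / δ) * (a / β) * ‖d₀‖ * ‖w‖ - κ / (α * δ) * ‖d₀‖ ^ 2 ≤ 0 := by
  have hd0nn : (0:ℝ) ≤ ‖d₀‖ := norm_nonneg _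
  haveI : CompleteSpace (LinearMap.ker (B : U →ₗ[ℝ] W →L[ℝ] ℝ)) :=
    (ContinuousLinearMap.isClosed_ker B).completeSpace_coe
  obtain ⟨u₀, hu₀K, u₁, hu₁K, huadd⟩ :
      ∃ y ∈ LinearMap.ker (B : U →ₗ[ℝ] W →L[ℝ] ℝ), ∃ z ∈ (LinearMap.ker (B : U →ₗ[ℝ] W →L[ℝ] ℝ))ᗮ, u = y + z :=
    ⟨_, Submodule.starProjection_apply_mem _ u, _,
      Submodule.sub_starProjection_mem_orthogonal u, by abel⟩
  have hBu₀0 : B u₀ = 0 := hu₀K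
  have hd₀u₁ : d₀ u₁ = 0 := hd₀ u₁ hu₁K
  have hDuu0 : D u u₀ = d₀ u₀ := by
    have e := h2 u₀
    rw [hBu₀0] at e
    simp only [ContinuousLinearMap.zero_apply, zero_sub, neg_inj] at e
    exact mul_left_cancel₀ hκ.ne' e
  have hd₀u : d₀ u = d₀ u₀ := by rw [huadd, map_add, hd₀u₁, add_zero]
  have hAww : A w w = κ * d₀ u₀ - κ * D u u := by
    have e1 := h1 w
    have e2 := h2 u
    rw [hd₀u] at e2
    linarith
  -- KEY inequality
  have KEY : α * ‖w‖^2 ≤ κ * (d/δ) * (a/β) * ‖d₀‖ * ‖w‖ + κ/δ * ‖d₀‖^2 := by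
    rcases eq_or_ne w 0 with hw0 | hw0
    · simp [hw0]
      positivity
    · have htpos : 0 < ‖w‖ := norm_pos_iff.mpr hw0
      have hA2 := hAcont w w
      have hA1 := hAcoer w
      have haα : α ≤ a := by nlinarith [hA1, hA2, mul_pos htpos htpos]
      have ha0 : 0 < a := lt_of_lt_of_le hα haα
      rcases lt_or_ge d δ with hdδ | hdδ
      · -- degenerate case : the kernel is trivial, so d₀ u₀ = 0 and w = 0
        have hu₀0 : u₀ = 0 := by
          by_contra h
          have hn : 0 < ‖u₀‖ := norm_pos_iff.mpr h
          have h3 := hDcoer u₀ hu₀K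
          have h4 := hDcont u₀ u₀
          nlinarith [mul_pos hn hn]
        have hd00 : d₀ u₀ = 0 := by rw [hu₀0, map_zero]
        have hAww' : A w w = -(κ * D u u) := by rw [hAww, hd00]; ring
        linarith [hA1, hAww', mul_nonneg hκ.le (hDpos u), mul_pos hα (pow_pos htpos 2)]
      · -- main case
        have hBu : ‖B u‖ ≤ a * ‖w‖ := by
          apply ContinuousLinearMap.opNorm_le_bound _ (by positivity)
          intro wt
          have e := h1 wt
          have c1 := hAcont w wt
          have c2 := hAcont w (-wt)
          rw [map_neg, norm_neg] at c2
          have hb : B u wt = - A w wt := by linarith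
          rw [hb, Real.norm_eq_abs, abs_le]
          constructor <;> linarith
        have hu₁n : β * ‖u₁‖ ≤ a * ‖w‖ := by
          have h3 := hinfsup u₁ hu₁K
          have hBu₁ : B u₁ = B u := by rw [huadd, map_add, hBu₀0, zero_add]
          rw [hBu₁] at h3
          linarith
        obtain ⟨p, hp0, hp2⟩ : ∃ p:ℝ, 0 ≤ p ∧ p^2 = D u₀ u₀ :=
          ⟨Real.sqrt _, Real.sqrt_nonneg _, Real.sq_sqrt (hDpos u₀)⟩
        obtain ⟨q, hq0, hq2⟩ : ∃ q:ℝ, 0 ≤ q ∧ q^2 = D u₁ u₁ :=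
          ⟨Real.sqrt _, Real.sqrt_nonneg _, Real.sq_sqrt (hDpos u₁)⟩
        have hX := Dcs D hDsym hDpos u₀ u₁
        have hXc : -(p*q) ≤ D u₀ u₁ ∧ D u₀ u₁ ≤ p*q := by
          constructor <;> nlinarith [hX, hp2, hq2, mul_nonneg hp0 hq0]
        have hDuu : D u u = p^2 + 2 * D u₀ u₁ + q^2 := by
          have e : D (u₀ + u₁) (u₀ + u₁)
              = D u₀ u₀ + D u₀ u₁ + (D u₁ u₀ + D u₁ u₁) := by
            simp only [map_add, ContinuousLinearMap.add_apply]
            ring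
          rw [huadd, e, hDsym u₁ u₀, ← hp2, ← hq2]
          ring
        have hDuu₀ : d₀ u₀ = p^2 + D u₀ u₁ := by
          have e : D (u₀ + u₁) u₀ = D u₀ u₀ + D u₁ u₀ := by
            simp only [map_add, ContinuousLinearMap.add_apply]
          rw [← hDuu0, huadd, e, hDsym u₁ u₀, ← hp2]
        have he1 : α * ‖w‖^2 ≤ κ * (d₀ u₀ - (p^2 + 2 * D u₀ u₁ + q^2)) := by
          rw [← hDuu]
          rw [hAww] at hA1
          linarith
        have hd₀b : d₀ u₀ ≤ ‖d₀‖ * ‖u₀‖ :=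
          le_trans (le_abs_self _) (by simpa [Real.norm_eq_abs] using d₀.le_opNorm u₀)
        have hq2' : q^2 ≤ d * ‖u₁‖^2 := by
          have := hDcont u₁ u₁
          nlinarith [hq2]
        exact arith_main hα hβ hδ hκ ha0 hdδ (norm_nonneg w) hd0nn (norm_nonneg u₀)
          (norm_nonneg u₁) hp0 hq0 hXc.1 hXc.2 (hp2 ▸ hDcoer u₀ hu₀K) hq2' hu₁n
          he1 hDuu₀ hd₀b
  exact ⟨arith_con1 hα hβ hδ hκ (norm_nonneg w) hd0nn KEY,
    arith_con2 hα hβ hδ hκ KEY⟩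
end

section
/- Hessian sign-decomposition: with Z := A + κ⁻¹B₀D⁻¹B₀ᵗ symmetric coercive and solutions (w', u₀', u₁') of the derivative system related by F = Zw' + B₁u₁', the quantity A(w',w') + 2B(u',w') − κD(u',u') equals ⟨Zw' + B₁u₁', w' + Z⁻¹B₁u₁'⟩ − ⟨B₁u₁', Z⁻¹B₁u₁'⟩ − κ⁻¹⟨B₀'D⁻¹B₀'ᵗ w, w⟩, where u' = u₀' + u₁', B u' = B₀u₀' + B₁u₁', and κDu₀' = B₀'ᵗ w + B₀ᵗ w'. -/
theorem stmt16 {W U₀ U₁ : Type*}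
    [NormedAddCommGroup W] [InnerProductSpace ℝ W] [CompleteSpace W]
    [NormedAddCommGroup U₀] [InnerProductSpace ℝ U₀] [CompleteSpace U₀]
    [NormedAddCommGroup U₁] [InnerProductSpace ℝ U₁] [CompleteSpace U₁]
    (A : W →L[ℝ] StrongDual ℝ W)
    (hAsym : ∀ w v : W, A w v = A v w)
    (α : ℝ) (hα : 0 < α) (hAcoer : ∀ w : W, α * ‖w‖ ^ 2 ≤ A w w)
    (B₀ B₀' : U₀ →L[ℝ] StrongDual ℝ W)
    (B₁ : U₁ →L[ℝ] StrongDual ℝ W)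
    (B₀t B₀'t : W →L[ℝ] StrongDual ℝ U₀)
    (B₁t : W →L[ℝ] StrongDual ℝ U₁)
    (htrans₀ : ∀ (u : U₀) (v : W), B₀ u v = B₀t v u)
    (htrans₀' : ∀ (u : U₀) (v : W), B₀' u v = B₀'t v u)
    (htrans₁ : ∀ (u : U₁) (v : W), B₁ u v = B₁t v u)
    (D : U₀ →L[ℝ] StrongDual ℝ U₀)
    (hDsym : ∀ u v : U₀, D u v = D v u)
    (δ : ℝ) (hδ : 0 < δ) (hDcoer : ∀ u : U₀, δ * ‖u‖ ^ 2 ≤ D u u)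
    (Dinv : StrongDual ℝ U₀ →L[ℝ] U₀)
    (hDinv1 : ∀ u : U₀, Dinv (D u) = u) (hDinv2 : ∀ φ, D (Dinv φ) = φ)
    (κ : ℝ) (hκ : 0 < κ)
    (Zinv : StrongDual ℝ W →L[ℝ] W)
    (hZinv1 : ∀ v : W, Zinv ((A + κ⁻¹ • (B₀.comp (Dinv.comp B₀t))) v) = v)
    (hZinv2 : ∀ φ, (A + κ⁻¹ • (B₀.comp (Dinv.comp B₀t))) (Zinv φ) = φ)
    (w w' : W) (u₀' : U₀) (u₁' : U₁)
    (hrel : κ • D u₀' = B₀'t w + B₀t w') :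
    A w' w' + 2 * (B₀ u₀' w' + B₁ u₁' w') - κ * D u₀' u₀'
      = ((A + κ⁻¹ • (B₀.comp (Dinv.comp B₀t))) w' + B₁ u₁')
          (w' + Zinv (B₁ u₁'))
        - (B₁ u₁') (Zinv (B₁ u₁'))
        - κ⁻¹ * (B₀' (Dinv (B₀'t w))) w := by
  set Z := A + κ⁻¹ • (B₀.comp (Dinv.comp B₀t)) with hZ
  -- symmetry of Dinv pairing
  have hDinvsym : ∀ φ ψ : StrongDual ℝ U₀, ψ (Dinv φ) = φ (Dinv ψ) := by
    intro φ ψ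
    conv_lhs => rw [← hDinv2 ψ]
    conv_rhs => rw [← hDinv2 φ]
    exact hDsym _ _
  -- symmetry of Z
  have hZsym : ∀ u v : W, Z u v = Z v u := by
    intro u v
    simp only [hZ, ContinuousLinearMap.add_apply, ContinuousLinearMap.smul_apply,
      ContinuousLinearMap.coe_comp', Function.comp_apply, smul_eq_mul]
    rw [hAsym u v, htrans₀ (Dinv (B₀t u)) v, htrans₀ (Dinv (B₀t v)) u,
      hDinvsym (B₀t u) (B₀t v)]
  have hZinvsym : ∀ φ ψ : StrongDual ℝ W, ψ (Zinv φ) = φ (Zinv ψ) := by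
    intro φ ψ
    conv_lhs => rw [← hZinv2 ψ]
    conv_rhs => rw [← hZinv2 φ]
    exact hZsym _ _
  -- express u₀'
  have hu : u₀' = κ⁻¹ • Dinv (B₀'t w + B₀t w') := by
    have h := congrArg Dinv hrel
    rw [map_smul, hDinv1] at h
    rw [← h, smul_smul, inv_mul_cancel₀ hκ.ne', one_smul]
  set a := B₀'t w with ha
  set b := B₀t w' with hb
  have key1 : (B₀ u₀') w' = κ⁻¹ * b (Dinv (a + b)) := by
    rw [htrans₀, hu, map_smul, ← hb]
    simp [smul_eq_mul]
  have key2 : (D u₀') u₀' = κ⁻¹ * (κ⁻¹ * (a + b) (Dinv (a + b))) := by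
    rw [hu]
    simp only [map_smul, hDinv2, ContinuousLinearMap.smul_apply, smul_eq_mul]
  have keyZ : Z w' (Zinv (B₁ u₁')) = (B₁ u₁') w' := by
    rw [hZsym, hZinv2]
  have keyZw : Z w' w' = A w' w' + κ⁻¹ * b (Dinv b) := by
    simp only [hZ, ContinuousLinearMap.add_apply, ContinuousLinearMap.smul_apply,
      ContinuousLinearMap.coe_comp', Function.comp_apply, smul_eq_mul, ← hb]
    rw [htrans₀ (Dinv b) w']
  have keya : (B₀' (Dinv a)) w = a (Dinv a) := by
    rw [htrans₀' (Dinv a) w, ← ha]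
  have hcross : a (Dinv b) = b (Dinv a) := hDinvsym b a
  -- expand RHS
  rw [ContinuousLinearMap.add_apply, map_add, map_add, keyZ, keyZw, keya, key1, key2]
  simp only [map_add, ContinuousLinearMap.add_apply]
  rw [← mul_assoc κ κ⁻¹, mul_inv_cancel₀ hκ.ne', one_mul]
  linear_combination -κ⁻¹ * hcross
end

section
/- Perturbation estimate for the large-κ limit: if for all κ ≥ κ₀ > 0 the solution operator of the coupled system satisfies the κ-uniform bounds of the large-κ estimates, and the truncation error Δ𝖴 = 𝖴 − 𝖴⁽⁰⁾ solves the same system with data f = 0 and d₀ = κ⁻¹B₀ᵗw⁽⁰⁾, then there is a constant C(κ₀) independent of κ such that ‖Δ𝖴‖ ≤ κ⁻¹C(κ₀) for all κ ≥ κ₀; i.e., 𝖴 = 𝖴⁽⁰⁾ + O(κ⁻¹). -/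
theorem stmt18 {W U₀ U₁ : Type*}
    [NormedAddCommGroup W] [NormedAddCommGroup U₀] [NormedAddCommGroup U₁]
    (κ₀ : ℝ) (hκ₀ : 0 < κ₀)
    (a α b β δ : ℝ) (hα : 0 < α) (hβ : 0 < β) (hδ : 0 < δ)
    (ha : 0 ≤ a) (hb : 0 ≤ b)
    (w0 : W)
    (ΔU : ℝ → W × U₀ × U₁)
    (h1 : ∀ κ ≥ κ₀, ‖(ΔU κ).1‖ ≤ ((b / α) * (b / δ) / κ) * ‖w0‖)
    (h2 : ∀ κ ≥ κ₀, ‖(ΔU κ).2.1‖ ≤ ((b / δ) / κ) * (1 + (b / α) * (b / δ) / κ) * ‖w0‖)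
    (h3 : ∀ κ ≥ κ₀, ‖(ΔU κ).2.2‖
        ≤ κ⁻¹ * (1 + a / α + (b / α) * (b / δ) / κ) * ((b / δ) / β) * ‖w0‖) :
    ∃ C > 0, ∀ κ ≥ κ₀, ‖ΔU κ‖ ≤ κ⁻¹ * C := by
  set s := b / δ with hs
  set t := b / α with ht
  have hs0 : 0 ≤ s := div_nonneg hb hδ.le
  have ht0 : 0 ≤ t := div_nonneg hb hα.le
  have hq0 : 0 ≤ a / α := div_nonneg ha hα.le
  have hκ₀inv : 0 ≤ κ₀⁻¹ := (inv_pos.mpr hκ₀).le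
  set C₁ := t * s * ‖w0‖ with hC₁
  set C₂ := s * (1 + t * s / κ₀) * ‖w0‖ with hC₂
  set C₃ := (1 + a / α + t * s / κ₀) * (s / β) * ‖w0‖ with hC₃
  refine ⟨max C₁ (max C₂ C₃) + 1, by positivity, fun κ hκ => ?_⟩
  have hκpos : 0 < κ := lt_of_lt_of_le hκ₀ hκ
  have hκinv : 0 ≤ κ⁻¹ := (inv_pos.mpr hκpos).le
  have hmono : t * s / κ ≤ t * s / κ₀ :=
    div_le_div_of_nonneg_left (by positivity) hκ₀ hκ
  have hw : 0 ≤ ‖w0‖ := norm_nonneg _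
  have b1 : ‖(ΔU κ).1‖ ≤ κ⁻¹ * C₁ := by
    have := h1 κ hκ
    calc ‖(ΔU κ).1‖ ≤ (t * s / κ) * ‖w0‖ := this
    _ = κ⁻¹ * C₁ := by rw [hC₁]; ring
  have b2 : ‖(ΔU κ).2.1‖ ≤ κ⁻¹ * C₂ := by
    have := h2 κ hκ
    calc ‖(ΔU κ).2.1‖ ≤ (s / κ) * (1 + t * s / κ) * ‖w0‖ := this
    _ ≤ (s / κ) * (1 + t * s / κ₀) * ‖w0‖ := by
        apply mul_le_mul_of_nonneg_right _ hw
        exact mul_le_mul_of_nonneg_left (by linarith) (by positivity)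
    _ = κ⁻¹ * C₂ := by rw [hC₂]; ring
  have b3 : ‖(ΔU κ).2.2‖ ≤ κ⁻¹ * C₃ := by
    have := h3 κ hκ
    calc ‖(ΔU κ).2.2‖ ≤ κ⁻¹ * (1 + a / α + t * s / κ) * (s / β) * ‖w0‖ := this
    _ ≤ κ⁻¹ * (1 + a / α + t * s / κ₀) * (s / β) * ‖w0‖ := by
        apply mul_le_mul_of_nonneg_right _ hw
        apply mul_le_mul_of_nonneg_right _ (by positivity)
        exact mul_le_mul_of_nonneg_left (by linarith) hκinv
    _ = κ⁻¹ * C₃ := by rw [hC₃]; ring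
  have hnorm : ‖ΔU κ‖ = max ‖(ΔU κ).1‖ (max ‖(ΔU κ).2.1‖ ‖(ΔU κ).2.2‖) := by
    rw [Prod.norm_def, Prod.norm_def]
  rw [hnorm]
  have hle : κ⁻¹ * (max C₁ (max C₂ C₃)) ≤ κ⁻¹ * (max C₁ (max C₂ C₃) + 1) := by
    apply mul_le_mul_of_nonneg_left (by linarith) hκinv
  refine max_le ?_ (max_le ?_ ?_)
  · exact b1.trans (le_trans (mul_le_mul_of_nonneg_left (le_max_left _ _) hκinv) hle)
  · exact b2.trans (le_trans (mul_le_mul_of_nonneg_left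
      ((le_max_left C₂ C₃).trans (le_max_right _ _)) hκinv) hle)
  · exact b3.trans (le_trans (mul_le_mul_of_nonneg_left
      ((le_max_right C₂ C₃).trans (le_max_right _ _)) hκinv) hle)
end
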